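/- Let D be an eulerian digraph (connected, with in-degree equal to out-degree at every vertex) and let s, t be distinct vertices such that every edge cut of the underlying undirected graph separating s from t contains at least 2k edges, where k ≥ 1. Then D contains k pairwise arc-disjoint directed paths from s to t and k pairwise arc-disjoint directed paths from t to s, all 2k paths being pairwise arc-disjoint. -/

import Mathlib

set_option linter.unusedSectionVars false
set_option linter.unreachableTactic false
set_option linter.unusedTactic false
set_option maxHeartbeats 1000000

/-- Directed walks in a digraph given by source/target maps. -/
def IsDiWalk {V A : Type} (src tgt : A → V) : V → V → List A → Prop
  | s, t, [] => s = t
  | s, t, a :: l => src a = s ∧ IsDiWalk src tgt (tgt a) t l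

/-- A directed path: a directed walk with no repeated vertices. -/
def IsDiPath {V A : Type} (src tgt : A → V) (s t : V) (l : List A) : Prop :=
  IsDiWalk src tgt s t l ∧ (s :: l.map tgt).Nodup


open Finset
section myHelpers
variable {V A : Type} [Fintype V] [Fintype A] [DecidableEq V] [DecidableEq A]

def dOutTo (σ : A → V) (f : A → ℤ) (v : V) : ℤ := ∑ a : A, if σ a = v then f a else 0

def excTo (src tgt : A → V) (f : A → ℤ) (v : V) : ℤ := dOutTo src f v - dOutTo tgt f v

lemma dOutTo_update (σ : A → V) (f : A → ℤ) (a : A) (x : ℤ) (v : V) :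
    dOutTo σ (fun b => if b = a then x else f b) v
      = dOutTo σ f v + (if σ a = v then x - f a else 0) := by
  have h : ∀ b : A, (if σ b = v then (if b = a then x else f b) else 0)
      = (if σ b = v then f b else 0) + (if b = a then (if σ a = v then x - f a else 0) else 0) := by
    intro b
    by_cases hb : b = a
    · subst hb; by_cases hs : σ b = v <;> simp [hs] <;> ring
    · simp [hb]
  unfold dOutTo
  rw [Finset.sum_congr rfl (fun b _ => h b), Finset.sum_add_distrib]
  congr 1
  simp

lemma excTo_update (src tgt : A → V) (f : A → ℤ) (a : A) (x : ℤ) (v : V) :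
    excTo src tgt (fun b => if b = a then x else f b) v
      = excTo src tgt f v + (if src a = v then x - f a else 0) - (if tgt a = v then x - f a else 0) := by
  unfold excTo
  rw [dOutTo_update, dOutTo_update]; ring

lemma sum_excTo (src tgt : A → V) (f : A → ℤ) (U : Finset V) :
    ∑ v ∈ U, excTo src tgt f v
      = ∑ a ∈ univ.filter (fun a => src a ∈ U ∧ tgt a ∉ U), f a
        - ∑ a ∈ univ.filter (fun a => tgt a ∈ U ∧ src a ∉ U), f a := by
  have key : ∀ σ : A → V, ∑ v ∈ U, dOutTo σ f v = ∑ a : A, (if σ a ∈ U then f a else 0) := by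
    intro σ
    unfold dOutTo
    rw [Finset.sum_comm]
    refine Finset.sum_congr rfl fun a _ => ?_
    by_cases h : σ a ∈ U
    · rw [if_pos h, Finset.sum_ite_eq U (σ a) (fun _ => f a), if_pos h]
    · rw [if_neg h, Finset.sum_ite_eq U (σ a) (fun _ => f a), if_neg h]
  unfold excTo
  rw [Finset.sum_sub_distrib, key, key, Finset.sum_filter, Finset.sum_filter,
    ← Finset.sum_sub_distrib, ← Finset.sum_sub_distrib]
  refine Finset.sum_congr rfl fun a _ => ?_
  by_cases h1 : src a ∈ U <;> by_cases h2 : tgt a ∈ U <;> simp [h1, h2]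


end myHelpers

section myChains
variable {V : Type} {rel : V → V → Prop}

lemma chain_suffix : ∀ (l : List V) (x a : V), List.Chain rel x l → a ∈ x :: l →
    ∃ q, (a :: q).Sublist (x :: l) ∧ List.Chain rel a q ∧ q.getLastD a = l.getLastD x := by
  intro l
  induction l with
  | nil => intro x a _ ha; simp at ha; subst ha; exact ⟨[], by simp, List.Chain.nil, rfl⟩
  | cons y ys ih =>
    intro x a hch ha
    obtain ⟨hxy, hch⟩ := List.isChain_cons_cons.1 hch
    rcases List.mem_cons.1 ha with rfl | ha
    · exact ⟨y :: ys, List.Sublist.refl _, hch, by simp [List.getLastD_cons]⟩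
    · obtain ⟨q, hsub, hq, hlast⟩ := ih y a hch ha
      exact ⟨q, hsub.trans (List.sublist_cons_self _ _), hq,
        by rw [hlast, List.getLastD_cons]⟩

lemma nodupify : ∀ (l : List V) (x : V), List.Chain rel x l →
    ∃ l', List.Chain rel x l' ∧ (x :: l').Nodup ∧ l'.getLastD x = l.getLastD x := by
  intro l
  induction l with
  | nil => intro x _; exact ⟨[], List.Chain.nil, by simp, rfl⟩
  | cons y ys ih =>
    intro x hch
    obtain ⟨hxy, hch⟩ := List.isChain_cons_cons.1 hch
    obtain ⟨l₂, hch₂, hnd₂, hlast₂⟩ := ih y hch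
    by_cases hx : x ∈ y :: l₂
    · obtain ⟨q, hsub, hq, hlast⟩ := chain_suffix l₂ y x hch₂ hx
      refine ⟨q, hq, hsub.nodup hnd₂, ?_⟩
      rw [hlast, hlast₂, List.getLastD_cons]
    · exact ⟨y :: l₂, List.Chain.cons hxy hch₂, by simp [hnd₂, hx], by
        rw [List.getLastD_cons, List.getLastD_cons, hlast₂]⟩

lemma rtg_chain {a b : V} (h : Relation.ReflTransGen rel a b) :
    ∃ l, List.Chain rel a l ∧ l.getLastD a = b := by
  induction h using Relation.ReflTransGen.head_induction_on with
  | refl => exact ⟨[], List.Chain.nil, rfl⟩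
  | head hrel _ ih =>
    obtain ⟨l, hch, hlast⟩ := ih
    exact ⟨_ :: l, List.Chain.cons hrel hch, by rw [List.getLastD_cons, hlast]⟩


end myChains

section myFlow
variable {V A : Type} [Fintype V] [Fintype A] [DecidableEq V] [DecidableEq A]

lemma augment (src tgt : A → V) (cap f : A → ℤ) (hf : ∀ a, 0 ≤ f a ∧ f a ≤ cap a)
    (rel : V → V → Prop)
    (hrel : ∀ u v, rel u v → ∃ a, (src a = u ∧ tgt a = v ∧ f a < cap a)
      ∨ (tgt a = u ∧ src a = v ∧ 0 < f a)) :
    ∀ (l : List V) (v : V), List.Chain rel v l → (v :: l).Nodup →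
    ∃ f' : A → ℤ, (∀ a, 0 ≤ f' a ∧ f' a ≤ cap a) ∧
      (∀ a, (src a ∉ v :: l ∨ tgt a ∉ v :: l) → f' a = f a) ∧
      (∀ w, excTo src tgt f' w
        = excTo src tgt f w + (if w = v then 1 else 0) - (if w = l.getLastD v then 1 else 0)) := by
  intro l
  induction l with
  | nil =>
    intro v _ _
    exact ⟨f, hf, fun _ _ => rfl, fun w => by simp⟩
  | cons u l' ih =>
    intro v hch hnd
    obtain ⟨hvu, hch⟩ := List.isChain_cons_cons.1 hch
    obtain ⟨f₁, hf₁, huntouched, hexc⟩ := ih u hch hnd.of_cons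
    obtain ⟨a, ha⟩ := hrel v u hvu
    have hvnotin : v ∉ u :: l' := (List.nodup_cons.1 hnd).1
    rcases ha with ⟨hs, ht, hlt⟩ | ⟨ht, hs, hpos⟩
    · -- forward arc: src a = v, tgt a = u
      have hfa : f₁ a = f a := huntouched a (Or.inl (hs ▸ hvnotin))
      refine ⟨fun b => if b = a then f a + 1 else f₁ b, ?_, ?_, ?_⟩
      · intro b
        dsimp only
        split_ifs with hb
        · subst hb; exact ⟨by linarith [(hf b).1], by linarith⟩
        · exact hf₁ b
      · intro b hb
        have hba : b ≠ a := by
          rintro rfl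
          rcases hb with hb | hb
          · exact hb (by rw [hs]; exact List.mem_cons_self)
          · exact hb (by rw [ht]; exact List.mem_cons_of_mem _ (List.mem_cons_self))
        simp only [if_neg hba]
        refine huntouched b ?_
        rcases hb with hb | hb
        · exact Or.inl (fun h => hb (List.mem_cons_of_mem _ h))
        · exact Or.inr (fun h => hb (List.mem_cons_of_mem _ h))
      · intro w
        have hne1 : v ≠ u := fun h => hvnotin (h ▸ List.mem_cons_self)
        have hne2 : v ≠ l'.getLastD u := fun h => hvnotin (h ▸ List.getLastD_mem_cons)
        have := excTo_update src tgt f₁ a (f a + 1) w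
        rw [this, hexc w, hfa, hs, ht, List.getLastD_cons]
        simp only [@eq_comm V v w, @eq_comm V u w]
        split_ifs <;>
          (first | ring1 | (exfalso; subst_vars; first | exact hne1 rfl | exact hne2 rfl))
    · -- backward arc: tgt a = v, src a = u
      have hfa : f₁ a = f a := huntouched a (Or.inr (ht ▸ hvnotin))
      refine ⟨fun b => if b = a then f a - 1 else f₁ b, ?_, ?_, ?_⟩
      · intro b
        dsimp only
        split_ifs with hb
        · subst hb; exact ⟨by linarith [(hf b).1], by linarith [(hf b).2]⟩
        · exact hf₁ b
      · intro b hb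
        have hba : b ≠ a := by
          rintro rfl
          rcases hb with hb | hb
          · exact hb (by rw [hs]; exact List.mem_cons_of_mem _ (List.mem_cons_self))
          · exact hb (by rw [ht]; exact List.mem_cons_self)
        simp only [if_neg hba]
        refine huntouched b ?_
        rcases hb with hb | hb
        · exact Or.inl (fun h => hb (List.mem_cons_of_mem _ h))
        · exact Or.inr (fun h => hb (List.mem_cons_of_mem _ h))
      · intro w
        have hne1 : v ≠ u := fun h => hvnotin (h ▸ List.mem_cons_self)
        have hne2 : v ≠ l'.getLastD u := fun h => hvnotin (h ▸ List.getLastD_mem_cons)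
        have := excTo_update src tgt f₁ a (f a - 1) w
        rw [this, hexc w, hfa, hs, ht, List.getLastD_cons]
        simp only [@eq_comm V v w, @eq_comm V u w]
        split_ifs <;>
          (first | ring1 | (exfalso; subst_vars; first | exact hne1 rfl | exact hne2 rfl))


lemma maxflow (src tgt : A → V) (s t : V) (hst : s ≠ t) (cap : A → ℤ)
    (hcap : ∀ a, 0 ≤ cap a) (k : ℕ)
    (hcut : ∀ U : Finset V, s ∈ U → t ∉ U →
      (k : ℤ) ≤ ∑ a ∈ univ.filter (fun a => src a ∈ U ∧ tgt a ∉ U), cap a) :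
    ∃ f : A → ℤ, (∀ a, 0 ≤ f a ∧ f a ≤ cap a) ∧
      ∀ w, excTo src tgt f w = (if w = s then (k:ℤ) else 0) - (if w = t then (k:ℤ) else 0) := by
  classical
  induction k with
  | zero =>
    exact ⟨fun _ => 0, fun a => ⟨le_refl 0, hcap a⟩, fun w => by simp [excTo, dOutTo]⟩
  | succ k ih =>
    obtain ⟨f, hf, hexc⟩ := ih (fun U hs ht => le_trans (by push_cast; linarith) (hcut U hs ht))
    set rel : V → V → Prop := fun u v => ∃ a, (src a = u ∧ tgt a = v ∧ f a < cap a)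
      ∨ (tgt a = u ∧ src a = v ∧ 0 < f a) with hreldef
    by_cases hreach : Relation.ReflTransGen rel s t
    · obtain ⟨l, hch, hlast⟩ := rtg_chain hreach
      obtain ⟨l', hch', hnd', hlast'⟩ := nodupify l s hch
      obtain ⟨f', hf', _, hexc'⟩ := augment src tgt cap f hf rel (fun u v h => h) l' s hch' hnd'
      refine ⟨f', hf', fun w => ?_⟩
      rw [hexc' w, hexc w, hlast', hlast]
      by_cases h1 : w = s <;> by_cases h2 : w = t
      · exact absurd (h1.symm.trans h2) hst
      · simp [h1, h2, hst, Ne.symm hst]; (try push_cast); try ring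
      · simp [h1, h2, hst, Ne.symm hst]; (try push_cast); try ring
      · simp [h1, h2]
    · exfalso
      set U : Finset V := univ.filter (fun v => Relation.ReflTransGen rel s v) with hU
      have hsU : s ∈ U := by
        simp only [hU, mem_filter, mem_univ, true_and]; exact Relation.ReflTransGen.refl
      have htU : t ∉ U := by
        simp only [hU, mem_filter, mem_univ, true_and]; exact hreach
      have hclosed : ∀ u v, u ∈ U → rel u v → v ∈ U := by
        intro u v hu hrel
        simp only [hU, mem_filter, mem_univ, true_and] at hu ⊢
        exact hu.tail hrel
      -- arcs out of U are saturated
      have hsat : ∀ a ∈ univ.filter (fun a => src a ∈ U ∧ tgt a ∉ U), f a = cap a := by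
        intro a ha
        simp only [mem_filter, mem_univ, true_and] at ha
        by_contra hne
        exact ha.2 (hclosed _ _ ha.1 ⟨a, Or.inl ⟨rfl, rfl, lt_of_le_of_ne (hf a).2 hne⟩⟩)
      have hzero : ∀ a ∈ univ.filter (fun a => tgt a ∈ U ∧ src a ∉ U), f a = 0 := by
        intro a ha
        simp only [mem_filter, mem_univ, true_and] at ha
        by_contra hne
        exact ha.2 (hclosed _ _ ha.1 ⟨a, Or.inr ⟨rfl, rfl, lt_of_le_of_ne (hf a).1 (Ne.symm hne)⟩⟩)
      have hsum := sum_excTo src tgt f U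
      have hsat' : ∑ a ∈ univ.filter (fun a => src a ∈ U ∧ tgt a ∉ U), f a
          = ∑ a ∈ univ.filter (fun a => src a ∈ U ∧ tgt a ∉ U), cap a :=
        Finset.sum_congr rfl hsat
      rw [hsat', Finset.sum_congr rfl hzero] at hsum
      have hval : ∑ v ∈ U, excTo src tgt f v = (k : ℤ) := by
        rw [Finset.sum_congr rfl (fun v _ => hexc v)]
        rw [Finset.sum_sub_distrib, Finset.sum_ite_eq' U s (fun _ => (k:ℤ)),
          Finset.sum_ite_eq' U t (fun _ => (k:ℤ)), if_pos hsU, if_neg htU]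
        ring
      have hge := hcut U hsU htU
      simp only [Finset.sum_const_zero, sub_zero] at hsum
      rw [hval] at hsum
      push_cast at hge
      omega


lemma extract (src tgt : A → V) (t : V) :
    ∀ (N : ℕ) (f : A → ℤ), (∀ a, f a = 0 ∨ f a = 1) →
    (univ.filter (fun a => f a = 1)).card ≤ N →
    ∀ v : V, (v = t ∨ 1 ≤ excTo src tgt f v) → (∀ w, w ≠ t → 0 ≤ excTo src tgt f w) →
    ∃ l : List A, IsDiWalk src tgt v t l ∧ l.Nodup ∧ ∀ a ∈ l, f a = 1 := by
  intro N
  induction N with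
  | zero =>
    intro f h01 hcard v hv hpos
    rcases hv with rfl | hexc
    · exact ⟨[], rfl, List.nodup_nil, by simp⟩
    by_cases hvt : v = t
    · exact ⟨[], hvt, List.nodup_nil, by simp⟩
    · exfalso
      -- there is an arc out of v with f = 1
      have harc : ∃ a, src a = v ∧ f a = 1 := by
        by_contra hno
        push_neg at hno
        have hdo : dOutTo src f v = 0 := by
          refine Finset.sum_eq_zero fun a _ => ?_
          by_cases hs : src a = v
          · rcases h01 a with h | h
            · simp [hs, h]
            · exact absurd h (hno a hs)
          · simp [hs]
        have hdi : 0 ≤ dOutTo tgt f v :=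
          Finset.sum_nonneg fun a _ => by
            by_cases hs : tgt a = v
            · rcases h01 a with h | h <;> simp [hs, h]
            · simp [hs]
        unfold excTo at hexc
        omega
      obtain ⟨a, hs, hf1⟩ := harc
      have : a ∈ univ.filter (fun a => f a = 1) := by simp [hf1]
      have := Finset.card_pos.2 ⟨a, this⟩
      omega
  | succ N ih =>
    intro f h01 hcard v hv hpos
    rcases hv with rfl | hexc
    · exact ⟨[], rfl, List.nodup_nil, by simp⟩
    by_cases hvt : v = t
    · exact ⟨[], hvt, List.nodup_nil, by simp⟩
    have harc : ∃ a, src a = v ∧ f a = 1 := by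
      by_contra hno
      push_neg at hno
      have hdo : dOutTo src f v = 0 := by
        refine Finset.sum_eq_zero fun a _ => ?_
        by_cases hs : src a = v
        · rcases h01 a with h | h
          · simp [hs, h]
          · exact absurd h (hno a hs)
        · simp [hs]
      have hdi : 0 ≤ dOutTo tgt f v :=
        Finset.sum_nonneg fun a _ => by
          by_cases hs : tgt a = v
          · rcases h01 a with h | h <;> simp [hs, h]
          · simp [hs]
      unfold excTo at hexc
      omega
    obtain ⟨a, hs, hf1⟩ := harc
    set f₁ : A → ℤ := fun b => if b = a then 0 else f b with hf₁def
    have h01' : ∀ b, f₁ b = 0 ∨ f₁ b = 1 := by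
      intro b; by_cases hb : b = a <;> simp [hf₁def, hb]; exact h01 b
    have hcard' : (univ.filter (fun b => f₁ b = 1)).card ≤ N := by
      have hsub : univ.filter (fun b => f₁ b = 1) ⊆ (univ.filter (fun b => f b = 1)).erase a := by
        intro b hb
        simp only [mem_filter, mem_univ, true_and, hf₁def] at hb
        by_cases hba : b = a
        · simp [hba] at hb
        · simp only [if_neg hba] at hb
          exact Finset.mem_erase.2 ⟨hba, by simp [hb]⟩
      have hale : a ∈ univ.filter (fun b => f b = 1) := by simp [hf1]
      calc (univ.filter (fun b => f₁ b = 1)).card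
          ≤ ((univ.filter (fun b => f b = 1)).erase a).card := Finset.card_le_card hsub
        _ = (univ.filter (fun b => f b = 1)).card - 1 := Finset.card_erase_of_mem hale
        _ ≤ N := by omega
    have hexc₁ : ∀ w, excTo src tgt f₁ w
        = excTo src tgt f w - (if src a = w then 1 else 0) + (if tgt a = w then 1 else 0) := by
      intro w
      rw [hf₁def, excTo_update src tgt f a 0 w, hf1]
      split_ifs <;> ring
    have hpos' : ∀ w, w ≠ t → 0 ≤ excTo src tgt f₁ w := by
      intro w hw
      rw [hexc₁ w]
      by_cases h1 : src a = w
      · rw [if_pos h1]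
        have hwv : w = v := by rw [← h1, hs]
        rw [hwv]
        by_cases h2 : tgt a = v <;> simp [h2] <;> omega
      · have := hpos w hw
        rw [if_neg h1]
        by_cases h2 : tgt a = w <;> simp [h2] <;> omega
    have hnext : tgt a = t ∨ 1 ≤ excTo src tgt f₁ (tgt a) := by
      by_cases htt : tgt a = t
      · exact Or.inl htt
      right
      rw [hexc₁ (tgt a), if_pos rfl]
      by_cases h1 : src a = tgt a
      · rw [if_pos h1]
        have : tgt a = v := by rw [← h1, hs]
        rw [this]; omega
      · rw [if_neg h1]
        have hvne : tgt a ≠ v := fun h => h1 (by rw [hs, h])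
        have := hpos (tgt a) htt
        omega
    obtain ⟨l, hwalk, hnd, hmem⟩ := ih f₁ h01' hcard' (tgt a) hnext hpos'
    refine ⟨a :: l, ⟨hs, hwalk⟩, ?_, ?_⟩
    · refine List.nodup_cons.2 ⟨fun hal => ?_, hnd⟩
      have := hmem a hal
      simp [hf₁def] at this
    · intro b hb
      rcases List.mem_cons.1 hb with rfl | hb
      · exact hf1
      · have := hmem b hb
        simp only [hf₁def] at this
        by_cases hba : b = a
        · subst hba; exact hf1
        · rwa [if_neg hba] at this




lemma walk_exc (src tgt : A → V) :
    ∀ (l : List A) (f : A → ℤ) (u v : V), IsDiWalk src tgt u v l → l.Nodup →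
    (∀ a ∈ l, f a = 1) → ∀ w, excTo src tgt (fun a => if a ∈ l then 0 else f a) w
      = excTo src tgt f w - (if u = w then 1 else 0) + (if v = w then 1 else 0) := by
  intro l
  induction l with
  | nil =>
    intro f u v hwalk _ _ w
    have huv : u = v := hwalk
    subst huv
    simp
  | cons a l' ih =>
    intro f u v hwalk hnd hone w
    obtain ⟨hsrc, hwalk'⟩ := hwalk
    have hal' : a ∉ l' := (List.nodup_cons.1 hnd).1
    set f₁ : A → ℤ := fun b => if b = a then 0 else f b with hf₁def
    have hkey : (fun b => if b ∈ a :: l' then 0 else f b)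
        = (fun b => if b ∈ l' then 0 else f₁ b) := by
      funext b
      by_cases hba : b = a
      · subst hba; simp [hal', hf₁def]
      · by_cases hbl : b ∈ l' <;> simp [hba, hbl, hf₁def]
    rw [hkey]
    have hone' : ∀ b ∈ l', f₁ b = 1 := by
      intro b hb
      have hba : b ≠ a := fun h => hal' (h ▸ hb)
      simp [hf₁def, hba]
      exact hone b (List.mem_cons_of_mem _ hb)
    rw [ih f₁ (tgt a) v hwalk' (List.nodup_cons.1 hnd).2 hone' w]
    have hupd := excTo_update src tgt f a 0 w
    rw [← hf₁def] at hupd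
    rw [hupd, hone a (List.mem_cons_self), hsrc]
    split_ifs <;> ring

lemma decomp (src tgt : A → V) (s t : V) (hst : s ≠ t) :
    ∀ (k : ℕ) (f : A → ℤ), (∀ a, f a = 0 ∨ f a = 1) →
    (∀ w, excTo src tgt f w = (if w = s then (k:ℤ) else 0) - (if w = t then (k:ℤ) else 0)) →
    ∃ L : List (List A), L.length = k ∧ L.flatten.Nodup ∧ (∀ a ∈ L.flatten, f a = 1) ∧
      ∀ l ∈ L, IsDiWalk src tgt s t l := by
  intro k
  induction k with
  | zero => intro f _ _; exact ⟨[], rfl, by simp, by simp, by simp⟩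
  | succ k ih =>
    intro f h01 hexc
    obtain ⟨l, hwalk, hnd, hone⟩ := extract src tgt t (univ.filter (fun a => f a = 1)).card f h01
      (le_refl _) s (Or.inr (by rw [hexc s, if_pos rfl, if_neg hst]; omega))
      (fun w hw => by rw [hexc w, if_neg hw]; split_ifs <;> omega)
    set f₂ : A → ℤ := fun a => if a ∈ l then 0 else f a with hf₂def
    have h01₂ : ∀ a, f₂ a = 0 ∨ f₂ a = 1 := by
      intro a; by_cases ha : a ∈ l <;> simp [hf₂def, ha]; exact h01 a
    have hexc₂ : ∀ w, excTo src tgt f₂ w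
        = (if w = s then (k:ℤ) else 0) - (if w = t then (k:ℤ) else 0) := by
      intro w
      rw [hf₂def, walk_exc src tgt l f s t hwalk hnd hone w, hexc w]
      by_cases h1 : w = s <;> by_cases h2 : w = t
      · exact absurd (h1.symm.trans h2) hst
      all_goals (simp [h1, h2, hst, Ne.symm hst, @eq_comm V s w, @eq_comm V t w] <;> (try push_cast) <;> (try ring))
    obtain ⟨L, hlen, hndL, honeL, hwalkL⟩ := ih f₂ h01₂ hexc₂
    refine ⟨l :: L, by simp [hlen], ?_, ?_, ?_⟩
    · simp only [List.flatten_cons]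
      rw [List.nodup_append]
      refine ⟨hnd, hndL, fun a ha b ha' hab => ?_⟩
      subst hab
      have := honeL a ha'
      simp [hf₂def, ha] at this
    · intro a ha
      rw [List.flatten_cons] at ha
      rcases List.mem_append.1 ha with ha | ha
      · exact hone a ha
      · have := honeL a ha
        by_cases hal : a ∈ l
        · exact hone a hal
        · simpa [hf₂def, hal] using this
    · intro l' hl'
      rcases List.mem_cons.1 hl' with rfl | hl'
      · exact hwalk
      · exact hwalkL l' hl'


end myFlow

section myPaths
variable {V A : Type}

lemma tail_path (src tgt : A → V) (v : V) :
    ∀ (p : List A) (w u : V), IsDiPath src tgt w v p → u ∈ w :: p.map tgt →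
    ∃ q, IsDiPath src tgt u v q ∧ ∀ a ∈ q, a ∈ p := by
  intro p
  induction p with
  | nil =>
    intro w u hpath hu
    simp at hu
    subst hu
    exact ⟨[], hpath, by simp⟩
  | cons b p' ih =>
    intro w u hpath hu
    obtain ⟨⟨hsrc, hwalk⟩, hnd⟩ := hpath
    rcases List.mem_cons.1 hu with rfl | hu
    · exact ⟨b :: p', ⟨⟨hsrc, hwalk⟩, hnd⟩, fun a ha => ha⟩
    · have hpath' : IsDiPath src tgt (tgt b) v p' := ⟨hwalk, (List.nodup_cons.1 hnd).2⟩
      obtain ⟨q, hq, hsub⟩ := ih (tgt b) u hpath' (by simpa using hu)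
      exact ⟨q, hq, fun a ha => List.mem_cons_of_mem _ (hsub a ha)⟩

lemma walk_to_path (src tgt : A → V) (v : V) [DecidableEq V] :
    ∀ (l : List A) (u : V), IsDiWalk src tgt u v l →
    ∃ q, IsDiPath src tgt u v q ∧ ∀ a ∈ q, a ∈ l := by
  intro l
  induction l with
  | nil =>
    intro u hwalk
    exact ⟨[], ⟨hwalk, by simp⟩, by simp⟩
  | cons a l' ih =>
    intro u hwalk
    obtain ⟨hsrc, hwalk'⟩ := hwalk
    obtain ⟨p, hp, hsub⟩ := ih (tgt a) hwalk'
    by_cases hu : u ∈ tgt a :: p.map tgt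
    · obtain ⟨q, hq, hsub'⟩ := tail_path src tgt v p (tgt a) u hp hu
      exact ⟨q, hq, fun b hb => List.mem_cons_of_mem _ (hsub b (hsub' b hb))⟩
    · refine ⟨a :: p, ⟨⟨hsrc, hp.1⟩, ?_⟩, ?_⟩
      · simp only [List.map_cons]
        exact List.nodup_cons.2 ⟨hu, hp.2⟩
      · intro b hb
        rcases List.mem_cons.1 hb with rfl | hb
        · exact List.mem_cons_self
        · exact List.mem_cons_of_mem _ (hsub b hb)


end myPaths

lemma flatten_disj {α : Type} : ∀ {L : List (List α)}, L.flatten.Nodup →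
    ∀ (i j : ℕ) (hi : i < L.length) (hj : j < L.length), i ≠ j →
    ∀ a ∈ L.get ⟨i, hi⟩, a ∉ L.get ⟨j, hj⟩ := by
  intro L
  induction L with
  | nil => intro _ i j hi _ _ _ _; exact absurd hi (by simp)
  | cons l L' ih =>
    intro hnd i j hi hj hij a ha
    rw [List.flatten_cons, List.nodup_append] at hnd
    obtain ⟨hl, hL', hdisj⟩ := hnd
    match i, j with
    | 0, 0 => exact absurd rfl hij
    | 0, j+1 =>
      intro haj
      exact hdisj a ha a (List.mem_flatten.2 ⟨L'.get ⟨j, by simpa using hj⟩, List.get_mem _ _, haj⟩) rfl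
    | i+1, 0 =>
      intro haj
      exact hdisj a haj a (List.mem_flatten.2 ⟨L'.get ⟨i, by simpa using hi⟩, List.get_mem _ _, ha⟩) rfl
    | i+1, j+1 =>
      exact ih hL' i j (by simpa using hi) (by simpa using hj) (by omega) a ha



/-- In an eulerian digraph (connected, balanced), if every edge cut of
the underlying undirected graph separating distinct vertices `s` and `t` has at
least `2k` edges (`k ≥ 1`), then there are `k` directed `s→t` paths and `k`
directed `t→s` paths, all `2k` pairwise arc-disjoint. -/
theorem stmt_3 {V A : Type} [Fintype V] [Fintype A] (src tgt : A → V)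
    (hbal : ∀ v : V, {a : A | tgt a = v}.ncard = {a : A | src a = v}.ncard)
    (hconn : ∀ u v : V, ∃ l : List A, IsDiWalk src tgt u v l)
    (s t : V) (hst : s ≠ t) (k : ℕ) (hk : 1 ≤ k)
    (hcut : ∀ U : Set V, s ∈ U → t ∉ U →
      2 * k ≤ {a : A | (src a ∈ U ∧ tgt a ∉ U) ∨ (tgt a ∈ U ∧ src a ∉ U)}.ncard) :
    ∃ P Q : Fin k → List A,
      (∀ i, IsDiPath src tgt s t (P i)) ∧ (∀ i, IsDiPath src tgt t s (Q i)) ∧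
      (∀ i j, i ≠ j → ∀ a ∈ P i, a ∉ P j) ∧
      (∀ i j, i ≠ j → ∀ a ∈ Q i, a ∉ Q j) ∧
      (∀ i j, ∀ a ∈ P i, a ∉ Q j) := by
  classical
  -- balance of the all-ones function
  have hbal1 : ∀ v : V, excTo src tgt (fun _ => (1:ℤ)) v = 0 := by
    intro v
    have h1 : ∀ σ : A → V, dOutTo σ (fun _ => (1:ℤ)) v = ((univ.filter (fun a => σ a = v)).card : ℤ) := by
      intro σ
      unfold dOutTo
      rw [Finset.sum_boole]
    have h2 : ∀ σ : A → V, {a : A | σ a = v}.ncard = (univ.filter (fun a => σ a = v)).card := by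
      intro σ
      rw [Set.ncard_eq_toFinset_card', Set.toFinset_setOf]
    unfold excTo
    rw [h1, h1]
    have := hbal v
    rw [h2, h2] at this
    omega
  -- every finset cut is balanced
  have hbalcut : ∀ U : Finset V,
      ((univ.filter (fun a => src a ∈ U ∧ tgt a ∉ U)).card : ℤ)
        = ((univ.filter (fun a => tgt a ∈ U ∧ src a ∉ U)).card : ℤ) := by
    intro U
    have := sum_excTo src tgt (fun _ => (1:ℤ)) U
    rw [Finset.sum_congr rfl (fun v _ => hbal1 v)] at this
    simp only [Finset.sum_const, nsmul_eq_mul, mul_one, Finset.sum_const_zero] at this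
    omega
  -- first cut condition
  have hcut1 : ∀ U : Finset V, s ∈ U → t ∉ U →
      (k : ℤ) ≤ ∑ a ∈ univ.filter (fun a => src a ∈ U ∧ tgt a ∉ U), (1:ℤ) := by
    intro U hsU htU
    have hc := hcut (↑U) (by simpa using hsU) (by simpa using htU)
    have hsplit : {a : A | (src a ∈ (↑U : Set V) ∧ tgt a ∉ (↑U : Set V)) ∨ (tgt a ∈ (↑U : Set V) ∧ src a ∉ (↑U : Set V))}.ncard
        = (univ.filter (fun a => src a ∈ U ∧ tgt a ∉ U)).card
          + (univ.filter (fun a => tgt a ∈ U ∧ src a ∉ U)).card := by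
      rw [Set.ncard_eq_toFinset_card', Set.toFinset_setOf]
      have : (univ.filter (fun a => (src a ∈ (↑U : Set V) ∧ tgt a ∉ (↑U : Set V)) ∨ (tgt a ∈ (↑U : Set V) ∧ src a ∉ (↑U : Set V))))
          = (univ.filter (fun a => src a ∈ U ∧ tgt a ∉ U)) ∪ (univ.filter (fun a => tgt a ∈ U ∧ src a ∉ U)) := by
        rw [← Finset.filter_or]
        refine Finset.filter_congr fun a _ => ?_
        simp
      rw [this, Finset.card_union_of_disjoint]
      rw [Finset.disjoint_left]
      intro a ha hb
      simp only [mem_filter, mem_univ, true_and] at ha hb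
      exact ha.2 hb.1
    rw [hsplit] at hc
    have := hbalcut U
    rw [Finset.sum_const, nsmul_eq_mul, mul_one]
    omega
  obtain ⟨f, hf, hexcf⟩ := maxflow src tgt s t hst (fun _ => (1:ℤ)) (fun _ => by norm_num) k hcut1
  have h01f : ∀ a, f a = 0 ∨ f a = 1 := fun a => by have := hf a; omega
  -- second cut condition
  have hcut2 : ∀ U : Finset V, t ∈ U → s ∉ U →
      (k : ℤ) ≤ ∑ a ∈ univ.filter (fun a => src a ∈ U ∧ tgt a ∉ U), (1 - f a) := by
    intro U htU hsU
    have hsum := sum_excTo src tgt f U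
    have hval : ∑ v ∈ U, excTo src tgt f v = -(k:ℤ) := by
      rw [Finset.sum_congr rfl (fun v _ => hexcf v), Finset.sum_sub_distrib,
        Finset.sum_ite_eq' U s (fun _ => (k:ℤ)), Finset.sum_ite_eq' U t (fun _ => (k:ℤ)),
        if_neg hsU, if_pos htU]
      ring
    have hle : ∑ a ∈ univ.filter (fun a => tgt a ∈ U ∧ src a ∉ U), f a
        ≤ ((univ.filter (fun a => tgt a ∈ U ∧ src a ∉ U)).card : ℤ) := by
      calc ∑ a ∈ univ.filter (fun a => tgt a ∈ U ∧ src a ∉ U), f a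
          ≤ ∑ a ∈ univ.filter (fun a => tgt a ∈ U ∧ src a ∉ U), (1:ℤ) :=
            Finset.sum_le_sum fun a _ => (hf a).2
        _ = _ := by rw [Finset.sum_const, nsmul_eq_mul, mul_one]
    have hbc := hbalcut U
    rw [Finset.sum_sub_distrib, Finset.sum_const, nsmul_eq_mul, mul_one]
    omega
  obtain ⟨g, hg, hexcg⟩ := maxflow src tgt t s hst.symm (fun a => 1 - f a)
    (fun a => by have := hf a; show (0:ℤ) ≤ 1 - f a; omega) k hcut2
  have h01g : ∀ a, g a = 0 ∨ g a = 1 := fun a => by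
    have h1 := (hg a).1
    have h2 : g a ≤ 1 - f a := (hg a).2
    have := hf a
    omega
  obtain ⟨Lf, hLflen, hLfnd, hLfone, hLfwalk⟩ := decomp src tgt s t hst k f h01f hexcf
  obtain ⟨Lg, hLglen, hLgnd, hLgone, hLgwalk⟩ := decomp src tgt t s hst.symm k g h01g hexcg
  -- choose paths inside each walk
  have hPex : ∀ i : Fin k, ∃ q, IsDiPath src tgt s t q ∧ ∀ a ∈ q, a ∈ Lf.get ⟨i, by omega⟩ :=
    fun i => walk_to_path src tgt t _ s (hLfwalk _ (List.get_mem _ _))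
  have hQex : ∀ i : Fin k, ∃ q, IsDiPath src tgt t s q ∧ ∀ a ∈ q, a ∈ Lg.get ⟨i, by omega⟩ :=
    fun i => walk_to_path src tgt s _ t (hLgwalk _ (List.get_mem _ _))
  refine ⟨fun i => (hPex i).choose, fun i => (hQex i).choose,
    fun i => (hPex i).choose_spec.1, fun i => (hQex i).choose_spec.1, ?_, ?_, ?_⟩
  · intro i j hij a hai haj
    exact flatten_disj hLfnd i j (by omega) (by omega) (fun h => hij (Fin.ext h)) a
      ((hPex i).choose_spec.2 a hai) ((hPex j).choose_spec.2 a haj)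
  · intro i j hij a hai haj
    exact flatten_disj hLgnd i j (by omega) (by omega) (fun h => hij (Fin.ext h)) a
      ((hQex i).choose_spec.2 a hai) ((hQex j).choose_spec.2 a haj)
  · intro i j a hai haj
    have hfa : f a = 1 := hLfone a
      (List.mem_flatten.2 ⟨_, List.get_mem _ _, (hPex i).choose_spec.2 a hai⟩)
    have hga : g a = 1 := hLgone a
      (List.mem_flatten.2 ⟨_, List.get_mem _ _, (hQex j).choose_spec.2 a haj⟩)
    have h2 : g a ≤ 1 - f a := (hg a).2
    omega
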